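/- Let f : ℝ → ℝ be continuous on [a,b] and suppose the right derivative f⁺(x) = lim_{h→0+} (f(x+h)-f(x))/h exists for every x in [a,b) and is continuous on [a,b). Then f is continuously differentiable on the open interval (a,b), with f'(x) = f⁺(x) for all x ∈ (a,b). -/

import Mathlib

open Set

/-- Key estimate: if `f` has right derivative `g` on `[u,v)` with `|g t - C| ≤ ε` there,
then `|f v - f u - C * (v - u)| ≤ ε * (v - u)`. -/
lemma right_deriv_key_estimate (f g : ℝ → ℝ) (C : ℝ) {u v : ℝ} (huv : u ≤ v) (ε : ℝ)
    (hf : ContinuousOn f (Icc u v))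
    (hd : ∀ t ∈ Ico u v, HasDerivWithinAt f (g t) (Ici t) t)
    (hb : ∀ t ∈ Ico u v, |g t - C| ≤ ε) :
    |f v - f u - C * (v - u)| ≤ ε * (v - u) := by
  have key := norm_image_sub_le_of_norm_deriv_right_le_segment
    (f := fun t => f t - C * t) (f' := fun t => g t - C)
    (hf.sub ((continuous_const.mul continuous_id).continuousOn))
    (fun t ht => (hd t ht).sub
      (by simpa using (hasDerivWithinAt_id t (Ici t)).const_mul C))
    hb v (right_mem_Icc.2 huv)
  have heq : f v - C * v - (f u - C * u) = f v - f u - C * (v - u) := by ring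
  simpa [Real.norm_eq_abs, heq] using key

theorem right_deriv_continuous_implies_C1 (f g : ℝ → ℝ) (a b : ℝ) (hab : a < b)
    (hf : ContinuousOn f (Icc a b))
    (hright : ∀ x ∈ Ico a b, HasDerivWithinAt f (g x) (Ici x) x)
    (hg : ContinuousOn g (Ico a b)) :
    (∀ x ∈ Ioo a b, HasDerivAt f (g x) x) ∧ ContinuousOn (deriv f) (Ioo a b) := by
  have main : ∀ x ∈ Ioo a b, HasDerivAt f (g x) x := by
    intro x hx
    rw [hasDerivAt_iff_isLittleO, Asymptotics.isLittleO_iff]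
    intro ε hε
    have hmem : Ico a b ∈ nhds x :=
      Filter.mem_of_superset (isOpen_Ioo.mem_nhds hx) Ioo_subset_Ico_self
    have hgx : ContinuousAt g x := (hg x (Ioo_subset_Ico_self hx)).continuousAt hmem
    have h1 : ∀ᶠ t in nhds x, |g t - g x| ≤ ε := by
      have := hgx.tendsto (Metric.closedBall_mem_nhds (g x) hε)
      filter_upwards [this] with t ht
      simpa [Real.dist_eq] using ht
    have h2 : ∀ᶠ t in nhds x, t ∈ Ioo a b := isOpen_Ioo.mem_nhds hx
    obtain ⟨δ, hδ, hball⟩ := Metric.eventually_nhds_iff_ball.1 (h1.and h2)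
    filter_upwards [Metric.ball_mem_nhds x hδ] with y hy
    have hyI : y ∈ Ioo a b := (hball y hy).2
    have hIcc : ∀ u v : ℝ, u ∈ Metric.ball x δ → v ∈ Metric.ball x δ →
        ∀ t ∈ Icc u v, t ∈ Metric.ball x δ := by
      intro u v hu hv t ht
      rw [Metric.mem_ball, Real.dist_eq] at *
      rcases abs_sub_lt_iff.1 hu with ⟨hu1, hu2⟩
      rcases abs_sub_lt_iff.1 hv with ⟨hv1, hv2⟩
      exact abs_sub_lt_iff.2 ⟨lt_of_le_of_lt (by linarith [ht.2]) hv1,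
        lt_of_le_of_lt (by linarith [ht.1]) hu2⟩
    have hxball : x ∈ Metric.ball x δ := Metric.mem_ball_self hδ
    rcases le_or_gt x y with hxy | hxy
    · -- right side: estimate on [x, y]
      have hIco : ∀ t ∈ Ico x y, t ∈ Metric.ball x δ := fun t ht =>
        hIcc x y hxball hy t ⟨ht.1, ht.2.le⟩
      have key := right_deriv_key_estimate f g (g x) hxy ε
        (hf.mono (Icc_subset_Icc hx.1.le hyI.2.le))
        (fun t ht => hright t (Ioo_subset_Ico_self (hball t (hIco t ht)).2))
        (fun t ht => (hball t (hIco t ht)).1)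
      calc ‖f y - f x - (y - x) • g x‖ = |f y - f x - g x * (y - x)| := by
            rw [Real.norm_eq_abs, smul_eq_mul, mul_comm]
        _ ≤ ε * (y - x) := key
        _ = ε * ‖y - x‖ := by rw [Real.norm_eq_abs, abs_of_nonneg (sub_nonneg.2 hxy)]
    · -- left side: estimate on [y, x]
      have hIco : ∀ t ∈ Ico y x, t ∈ Metric.ball x δ := fun t ht =>
        hIcc y x hy hxball t ⟨ht.1, ht.2.le⟩
      have key := right_deriv_key_estimate f g (g x) hxy.le ε
        (hf.mono (Icc_subset_Icc hyI.1.le hx.2.le))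
        (fun t ht => hright t (Ioo_subset_Ico_self (hball t (hIco t ht)).2))
        (fun t ht => (hball t (hIco t ht)).1)
      calc ‖f y - f x - (y - x) • g x‖ = |f x - f y - g x * (x - y)| := by
            rw [Real.norm_eq_abs, smul_eq_mul, ← abs_neg]; ring_nf
        _ ≤ ε * (x - y) := key
        _ = ε * ‖y - x‖ := by
            rw [Real.norm_eq_abs, abs_of_nonpos (sub_nonpos.2 hxy.le)]; ring
  refine ⟨main, ?_⟩
  exact (hg.mono Ioo_subset_Ico_self).congr fun x hx => (main x hx).deriv
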